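/- Every covariant causet has exactly two covariant offspring: if x has shell sequence (s_0,...,s_m), its covariant offspring are the c-causets with shell sequences (s_0,...,s_m + 1) and (s_0,...,s_m, 1). -/

import Mathlib

/-- A covariant causet: any two elements of different heights are comparable. -/
def CCauset (α : Type) [PartialOrder α] : Prop :=
  ∀ a b : α, Order.height a ≠ Order.height b → (a < b ∨ b < a)

/-- `β` is an offspring of `α`: `β` is obtained from `α` by adjoining a single
maximal element. -/
def IsOffspring (α β : Type) [PartialOrder α] [PartialOrder β] : Prop :=
  ∃ b : β, IsMax b ∧ Nonempty (α ≃o {c : β // c ≠ b})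

/-- The largest height occurring in a finite poset. -/
noncomputable def maxHeight (α : Type) [PartialOrder α] [Fintype α] : ℕ :=
  Finset.univ.sup fun a : α => (Order.height a).toNat

/-- The shell sequence of a finite poset: the list of cardinalities of the
shells `S_j = {a : h(a) = j}`, `j = 0, …, maxHeight`. -/
noncomputable def shellSeq (α : Type) [PartialOrder α] [Fintype α] : List ℕ :=
  (List.range (maxHeight α + 1)).map fun j =>
    Nat.card {a : α // Order.height a = (j : ℕ∞)}

/-- The shell sequence with its last component incremented (the 0-offspring). -/
def off0 (s : List ℕ) : List ℕ := s.dropLast ++ [s.getLast! + 1]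

/-- The shell sequence with a new final component `1` (the 1-offspring). -/
def off1 (s : List ℕ) : List ℕ := s ++ [1]

namespace CausetAux

variable {α : Type} [PartialOrder α]

lemma fin_height [Fintype α] (a : α) : Order.height a ≠ ⊤ := by
  intro h
  obtain ⟨p, -, hlen⟩ := Order.height_eq_top_iff.mp h (Fintype.card α)
  have := p.length_lt_card
  omega

lemma height_coe_embed {β : Type} [PartialOrder β] {b : β} (hb : IsMax b)
    (e : α ≃o {c : β // c ≠ b}) (a : α) :
    Order.height ((e a : {c : β // c ≠ b}) : β) = Order.height a := by
  apply le_antisymm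
  · rw [Order.height_le_iff]
    intro p hlast
    have hne : ∀ i, p.toFun i ≠ b := by
      intro i hib
      have h1 : p.toFun i ≤ ((e a : {c : β // c ≠ b}) : β) :=
        le_trans (p.monotone (Fin.le_last i)) hlast
      rw [hib] at h1
      exact (e a).2 (le_antisymm (hb h1) h1)
    let q : LTSeries α := ⟨p.length, fun i => e.symm ⟨p.toFun i, hne i⟩, fun i => by
      have := p.step i
      exact e.symm.lt_iff_lt.mpr (Subtype.mk_lt_mk.mpr this)⟩
    have hq : q.last ≤ a := by
      have h2 : (⟨p.toFun (Fin.last _), hne _⟩ : {c : β // c ≠ b}) ≤ e a :=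
        Subtype.mk_le_mk.mpr hlast
      have h3 := e.symm.monotone h2
      rw [e.symm_apply_apply] at h3
      exact h3
    exact Order.length_le_height (p := q) hq
  · exact Order.height_le_height_apply_of_strictMono _
      (fun x y h => Subtype.coe_lt_coe.mpr (e.strictMono h)) a

lemma height_mem_embed {β : Type} [PartialOrder β] {b : β} (hb : IsMax b)
    (e : α ≃o {c : β // c ≠ b}) (c : β) (hc : c ≠ b) :
    Order.height c = Order.height (e.symm ⟨c, hc⟩) := by
  have := height_coe_embed hb e (e.symm ⟨c, hc⟩)
  simp only [OrderIso.apply_symm_apply] at this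
  exact this

lemma height_le_maxHeight [Fintype α] (a : α) :
    Order.height a ≤ (maxHeight α : ℕ∞) := by
  have h := Finset.le_sup (f := fun a : α => (Order.height a).toNat) (Finset.mem_univ a)
  rw [← ENat.coe_toNat (fin_height a)]
  exact_mod_cast h

lemma exists_height_eq_maxHeight [Fintype α] [Nonempty α] :
    ∃ a : α, Order.height a = (maxHeight α : ℕ∞) := by
  obtain ⟨a, -, ha⟩ := Finset.exists_mem_eq_sup Finset.univ Finset.univ_nonempty
      (fun a : α => (Order.height a).toNat)
  refine ⟨a, ?_⟩
  rw [← ENat.coe_toNat (fin_height a)]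
  exact_mod_cast congrArg (Nat.cast : ℕ → ℕ∞) ha.symm

lemma exists_height_eq [Fintype α] [Nonempty α] {j : ℕ} (hj : j ≤ maxHeight α) :
    ∃ a : α, Order.height a = (j : ℕ∞) := by
  obtain ⟨a, ha⟩ := exists_height_eq_maxHeight (α := α)
  obtain ⟨p, hplast, hplen⟩ := Order.exists_series_of_height_eq_coe a ha
  refine ⟨p.toFun ⟨j, by omega⟩, ?_⟩
  have := Order.height_eq_index_of_length_eq_height_last (p := p)
      (by rw [hplast, ha, hplen]) ⟨j, by omega⟩
  simpa using this


section Offspring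
variable {β : Type} [PartialOrder β]

lemma shell_card_eq [Fintype α] [Fintype β] {b : β} (hb : IsMax b)
    (e : α ≃o {c : β // c ≠ b}) {j : ℕ} (hj : Order.height b ≠ (j : ℕ∞)) :
    Nat.card {c : β // Order.height c = (j : ℕ∞)} =
      Nat.card {a : α // Order.height a = (j : ℕ∞)} := by
  apply Nat.card_congr
  refine ⟨fun c => ⟨e.symm ⟨c.1, fun h => hj (h ▸ c.2)⟩, ?_⟩,
          fun a => ⟨(e a.1 : β), ?_⟩, ?_, ?_⟩
  · rw [← height_mem_embed hb e c.1 _]; exact c.2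
  · rw [height_coe_embed hb e]; exact a.2
  · intro c; ext; simp
  · intro a; ext; simp

lemma shell_card_b [Fintype α] [Fintype β] {b : β} (hb : IsMax b)
    (e : α ≃o {c : β // c ≠ b}) {j : ℕ} (hbj : Order.height b = (j : ℕ∞)) :
    Nat.card {c : β // Order.height c = (j : ℕ∞)} =
      Nat.card {a : α // Order.height a = (j : ℕ∞)} + 1 := by
  classical
  rw [← Finite.card_option]
  apply Nat.card_congr
  refine ⟨fun c => if h : c.1 = b then none else
            some ⟨e.symm ⟨c.1, h⟩, by rw [← height_mem_embed hb e c.1 h]; exact c.2⟩,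
          fun o => o.elim ⟨b, hbj⟩
            (fun a => ⟨(e a.1 : β), by rw [height_coe_embed hb e]; exact a.2⟩),
          ?_, ?_⟩
  · intro c
    by_cases h : c.1 = b
    · simp only [h, dif_pos]
      exact Subtype.ext h.symm
    · simp only [h, dif_neg, not_false_iff, Option.elim]
      ext; simp
  · intro o
    match o with
    | none => simp
    | some a =>
      simp only [Option.elim]
      refine (dif_neg (e a.1).2).trans ?_
      congr 1
      ext; simp

lemma shell_card_top [Fintype α] [Fintype β] {b : β} (hb : IsMax b)
    (e : α ≃o {c : β // c ≠ b}) {j : ℕ} (hbj : Order.height b = (j : ℕ∞))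
    (hgt : (maxHeight α : ℕ∞) < (j : ℕ∞)) :
    Nat.card {c : β // Order.height c = (j : ℕ∞)} = 1 := by
  rw [Nat.card_eq_one_iff_unique]
  constructor
  · constructor
    rintro ⟨c, hc⟩ ⟨d, hd⟩
    have key : ∀ x : β, Order.height x = (j : ℕ∞) → x = b := by
      intro x hx
      by_contra h
      rw [height_mem_embed hb e x h] at hx
      exact absurd (hx ▸ height_le_maxHeight (e.symm ⟨x, h⟩)) (not_le.mpr hgt)
    simp [key c hc, key d hd]
  · exact ⟨⟨b, hbj⟩⟩

lemma maxHeight_offspring [Fintype α] [Fintype β] {b : β} (hb : IsMax b)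
    (e : α ≃o {c : β // c ≠ b}) {t : ℕ} (hbt : Order.height b = (t : ℕ∞))
    (hmt : maxHeight α ≤ t) :
    maxHeight β = t := by
  apply le_antisymm
  · apply Finset.sup_le
    intro c _
    by_cases h : c = b
    · subst h; rw [hbt]; simp
    · have h1 : Order.height c ≤ (maxHeight α : ℕ∞) := by
        rw [height_mem_embed hb e c h]; exact height_le_maxHeight _
      have h2 := ENat.coe_toNat (fin_height c)
      rw [← h2] at h1
      have : (Order.height c).toNat ≤ maxHeight α := by exact_mod_cast h1
      omega
  · have := Finset.le_sup (f := fun c : β => (Order.height c).toNat) (Finset.mem_univ b)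
    simp [hbt] at this
    exact this

lemma shellSeq_eq (γ : Type) [PartialOrder γ] [Fintype γ] :
    shellSeq γ = (List.range (maxHeight γ + 1)).map
      (fun j : ℕ => Nat.card {a : γ // Order.height a = (j : ℕ∞)}) := by
  unfold shellSeq
  rw [show (do let a ← List.range (maxHeight γ + 1); pure ((a : ℕ∞))) =
      (List.range (maxHeight γ + 1)).map Nat.cast by simp [List.map_eq_flatMap],
    List.map_map]
  rfl

lemma shellSeq_off0 [Fintype α] [Nonempty α] [Fintype β] {b : β} (hb : IsMax b)
    (e : α ≃o {c : β // c ≠ b}) (hbt : Order.height b = (maxHeight α : ℕ∞)) :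
    shellSeq β = off0 (shellSeq α) := by
  have hmb : maxHeight β = maxHeight α := maxHeight_offspring hb e hbt le_rfl
  rw [shellSeq_eq, shellSeq_eq, hmb, List.range_succ, List.map_append,
    List.map_append, List.map_singleton, List.map_singleton, off0,
    List.dropLast_concat, List.getLast!_of_getLast? List.getLast?_concat]
  congr 1
  · apply List.map_congr_left
    intro j hj
    rw [List.mem_range] at hj
    refine shell_card_eq hb e ?_
    rw [hbt]
    intro h
    have : maxHeight α = j := by exact_mod_cast h
    omega
  · rw [shell_card_b hb e hbt]

lemma shellSeq_off1 [Fintype α] [Nonempty α] [Fintype β] {b : β} (hb : IsMax b)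
    (e : α ≃o {c : β // c ≠ b}) (hbt : Order.height b = ((maxHeight α + 1 : ℕ) : ℕ∞)) :
    shellSeq β = off1 (shellSeq α) := by
  have hmb : maxHeight β = maxHeight α + 1 := maxHeight_offspring hb e hbt (by omega)
  rw [shellSeq_eq, shellSeq_eq, hmb, List.range_succ, List.map_append,
    List.map_singleton, off1]
  congr 1
  · apply List.map_congr_left
    intro j hj
    rw [List.mem_range] at hj
    refine shell_card_eq hb e ?_
    rw [hbt]
    intro h
    have : maxHeight α + 1 = j := by exact_mod_cast h
    omega
  · rw [shell_card_top hb e hbt (by exact_mod_cast Nat.lt_succ_self _)]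

lemma height_b_cases [Fintype α] [Nonempty α] [Fintype β] {b : β} (hb : IsMax b)
    (e : α ≃o {c : β // c ≠ b}) (hcov : CCauset β) :
    Order.height b = (maxHeight α : ℕ∞) ∨
      Order.height b = ((maxHeight α + 1 : ℕ) : ℕ∞) := by
  obtain ⟨t, ht⟩ : ∃ t : ℕ, Order.height b = (t : ℕ∞) :=
    ⟨_, (ENat.coe_toNat (fin_height b)).symm⟩
  have hle : t ≤ maxHeight α + 1 := by
    have : Order.height b ≤ ((maxHeight α + 1 : ℕ) : ℕ∞) := by
      rw [Order.height_le_coe_iff]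
      intro y hy
      have h1 : Order.height y ≤ (maxHeight α : ℕ∞) := by
        rw [height_mem_embed hb e y (ne_of_lt hy)]
        exact height_le_maxHeight _
      refine lt_of_le_of_lt h1 ?_
      exact_mod_cast Nat.lt_succ_self _
    rw [ht] at this
    exact_mod_cast this
  have hge : maxHeight α ≤ t := by
    by_contra h
    push_neg at h
    obtain ⟨a, ha⟩ := exists_height_eq (α := α) (j := t + 1) (by omega)
    have hne : Order.height ((e a : {c : β // c ≠ b}) : β) ≠ Order.height b := by
      rw [height_coe_embed hb e, ha, ht]
      intro hcontra
      have : t + 1 = t := by exact_mod_cast hcontra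
      omega
    rcases hcov _ b hne with hlt | hlt
    · have h5 := Order.height_strictMono hlt (lt_of_le_of_ne le_top (fin_height _))
      rw [height_coe_embed hb e, ha, ht] at h5
      have : t + 1 < t := by exact_mod_cast h5
      omega
    · exact hb.not_lt hlt
  have : t = maxHeight α ∨ t = maxHeight α + 1 := by omega
  rcases this with h | h
  · exact Or.inl (h ▸ ht)
  · exact Or.inr (h ▸ ht)

end Offspring


/-- `α` with one new maximal element, placed above exactly the elements of height `< t`. -/
def Ext (α : Type) (_t : ℕ) : Type := Option α

namespace Ext

variable {t : ℕ}

@[reducible] def mk (a : α) : Ext α t := some a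

@[reducible] def top : Ext α t := none

protected def le : Ext α t → Ext α t → Prop
  | some a, some b => a ≤ b
  | some a, none => Order.height a < (t : ℕ∞)
  | none, some _ => False
  | none, none => True

instance : PartialOrder (Ext α t) where
  le := Ext.le
  le_refl x := by
    cases x with
    | none => trivial
    | some a => exact le_refl a
  le_trans x y z hxy hyz := by
    match x, y, z, hxy, hyz with
    | some a, some b, some c, h1, h2 => exact le_trans (α := α) h1 h2
    | some a, some b, none, h1, h2 => exact lt_of_le_of_lt (Order.height_mono h1) h2
    | some a, none, none, h1, _ => exact h1
    | none, none, none, _, _ => trivial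
    | some _, none, some _, _, h2 => exact h2.elim
    | none, some _, _, h1, _ => exact h1.elim
    | none, none, some _, _, h2 => exact h2.elim
  le_antisymm x y hxy hyx := by
    match x, y, hxy, hyx with
    | some a, some b, h1, h2 => exact congrArg some (le_antisymm h1 h2)
    | none, none, _, _ => rfl
    | some _, none, h1, h2 => exact h2.elim
    | none, some _, h1, _ => exact h1.elim

instance [Fintype α] : Fintype (Ext α t) := inferInstanceAs (Fintype (Option α))

lemma mk_le_mk {a b : α} : (mk a : Ext α t) ≤ mk b ↔ a ≤ b := Iff.rfl

lemma mk_le_top {a : α} : (mk a : Ext α t) ≤ top ↔ Order.height a < (t : ℕ∞) := Iff.rfl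

lemma not_top_le_mk {a : α} : ¬ ((top : Ext α t) ≤ mk a) := fun h => h

lemma mk_lt_mk {a b : α} : (mk a : Ext α t) < mk b ↔ a < b := by
  rw [lt_iff_le_not_ge (α := α), lt_iff_le_not_ge (α := Ext α t)]
  exact Iff.rfl

lemma mk_lt_top {a : α} : (mk a : Ext α t) < top ↔ Order.height a < (t : ℕ∞) := by
  rw [lt_iff_le_not_ge (α := Ext α t)]
  exact ⟨fun h => h.1, fun h => ⟨h, not_top_le_mk⟩⟩

lemma isMax_top : IsMax (top : Ext α t) := by
  intro y h
  match y, h with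
  | some a, h => exact absurd h not_top_le_mk
  | none, _ => exact le_refl _

def iso : α ≃o {c : Ext α t // c ≠ top} :=
  { toFun := fun a => ⟨mk a, fun h => Option.some_ne_none a h⟩
    invFun := fun c => match c with
      | ⟨some a, _⟩ => a
      | ⟨none, h⟩ => absurd rfl h
    left_inv := fun a => rfl
    right_inv := fun c => by
      match c with
      | ⟨some a, _⟩ => rfl
      | ⟨none, h⟩ => exact absurd rfl h
    map_rel_iff' := Iff.rfl }

lemma height_mk (a : α) :
    Order.height (mk a : Ext α t) = Order.height a :=
  height_coe_embed isMax_top (iso (α := α) (t := t)) a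

lemma height_top [Fintype α] [Nonempty α] (h2 : t ≤ maxHeight α + 1) :
    Order.height (top : Ext α t) = (t : ℕ∞) := by
  rw [Order.height_eq_coe_iff]
  refine ⟨lt_of_le_of_ne le_top (fin_height _), ?_, ?_⟩
  · rcases Nat.eq_zero_or_pos t with h0 | h0
    · exact Or.inl h0
    · refine Or.inr ?_
      obtain ⟨a, ha⟩ := exists_height_eq (α := α) (j := t - 1) (by omega)
      refine ⟨mk a, ?_, ?_⟩
      · rw [mk_lt_top, ha]
        exact_mod_cast Nat.sub_lt h0 one_pos
      · rw [height_mk, ha]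
        simp [Nat.cast_sub h0]
  · intro y hy
    match y, hy with
    | some a, hy =>
      rw [height_mk]
      exact mk_lt_top.mp hy
    | none, hy => exact absurd hy (lt_irrefl _)

lemma offspring [Fintype α] : IsOffspring α (Ext α t) :=
  ⟨top, isMax_top, ⟨iso⟩⟩

lemma ccauset [Fintype α] [Nonempty α] (hx : CCauset α) (h1 : maxHeight α ≤ t)
    (h2 : t ≤ maxHeight α + 1) : CCauset (Ext α t) := by
  intro c d hcd
  match c, d with
  | some a, some b =>
    rw [height_mk, height_mk] at hcd
    rcases hx a b hcd with h | h
    · exact Or.inl (mk_lt_mk.mpr h)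
    · exact Or.inr (mk_lt_mk.mpr h)
  | some a, none =>
    refine Or.inl (mk_lt_top.mpr ?_)
    rw [height_mk, height_top h2] at hcd
    have hle : Order.height a ≤ (t : ℕ∞) :=
      le_trans (height_le_maxHeight a) (by exact_mod_cast h1)
    exact lt_of_le_of_ne hle hcd
  | none, some a =>
    refine Or.inr (mk_lt_top.mpr ?_)
    rw [height_mk, height_top h2] at hcd
    have hle : Order.height a ≤ (t : ℕ∞) :=
      le_trans (height_le_maxHeight a) (by exact_mod_cast h1)
    exact lt_of_le_of_ne hle (Ne.symm hcd)
  | none, none => exact absurd rfl hcd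

end Ext

end CausetAux

open CausetAux in
/-- Every covariant causet has exactly two covariant offspring, namely those
with shell sequences `(s_0,…,s_m + 1)` and `(s_0,…,s_m,1)`. -/
theorem two_covariant_offspring (α : Type) [PartialOrder α] [Fintype α] [Nonempty α]
    (hx : CCauset α) :
    (∀ (β : Type) (i1 : PartialOrder β) (i2 : Fintype β),
        @IsOffspring α β _ i1 → @CCauset β i1 →
          @shellSeq β i1 i2 = off0 (shellSeq α) ∨ @shellSeq β i1 i2 = off1 (shellSeq α)) ∧
    (∃ (β : Type) (i1 : PartialOrder β) (i2 : Fintype β),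
        @IsOffspring α β _ i1 ∧ @CCauset β i1 ∧ @shellSeq β i1 i2 = off0 (shellSeq α)) ∧
    (∃ (β : Type) (i1 : PartialOrder β) (i2 : Fintype β),
        @IsOffspring α β _ i1 ∧ @CCauset β i1 ∧ @shellSeq β i1 i2 = off1 (shellSeq α)) := by
  constructor
  · intro β i1 i2 hoff hcov
    obtain ⟨b, hb, ⟨e⟩⟩ := hoff
    rcases height_b_cases hb e hcov with h | h
    · exact Or.inl (shellSeq_off0 hb e h)
    · exact Or.inr (shellSeq_off1 hb e h)
  constructor
  · exact ⟨Ext α (maxHeight α), inferInstance, inferInstance, Ext.offspring,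
      Ext.ccauset hx le_rfl (Nat.le_succ _),
      shellSeq_off0 Ext.isMax_top Ext.iso (Ext.height_top (Nat.le_succ _))⟩
  · exact ⟨Ext α (maxHeight α + 1), inferInstance, inferInstance, Ext.offspring,
      Ext.ccauset hx (Nat.le_succ _) le_rfl,
      shellSeq_off1 Ext.isMax_top Ext.iso (Ext.height_top le_rfl)⟩
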